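/- Let Δ > 0, let U be a real random variable uniformly distributed on [−Δ/2, Δ/2], and let X be any real random variable independent of U. Then the law of X + U is not a Gaussian measure: for every m ∈ ℝ and every v ≥ 0, the distribution of X + U is not equal to the Gaussian distribution on ℝ with mean m and variance v. -/

import Mathlib

open MeasureTheory ProbabilityTheory

/-- The uniform probability measure on the interval `[-Δ/2, Δ/2]`. -/
noncomputable def uniformDitherMeasure (Δ : ℝ) : Measure ℝ :=
  (ENNReal.ofReal Δ)⁻¹ • volume.restrict (Set.Icc (-(Δ / 2)) (Δ / 2))

section Aux
open Real Complex

noncomputable def cf (μ : Measure ℝ) (t : ℝ) : ℂ := ∫ x, Complex.exp (Complex.I * t * x) ∂μ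

lemma integrable_bd1 {Ω : Type*} [MeasurableSpace Ω] (P : Measure Ω) [IsProbabilityMeasure P]
    {f : Ω → ℝ} (hf : Measurable f) (h : ∀ ω, |f ω| ≤ 1) : Integrable f P :=
  Integrable.mono' (integrable_const 1) hf.aestronglyMeasurable
    (Filter.Eventually.of_forall (by simpa [Real.norm_eq_abs] using h))

lemma cexp_I_mul (θ : ℝ) :
    Complex.exp (Complex.I * θ) = (Real.cos θ : ℂ) + (Real.sin θ : ℂ) * Complex.I := by
  rw [mul_comm, Complex.exp_mul_I, Complex.ofReal_cos, Complex.ofReal_sin]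

lemma integral_ofReal_add_mul_I {Ω : Type*} [MeasurableSpace Ω] (P : Measure Ω)
    {f g : Ω → ℝ} (hf : Integrable f P) (hg : Integrable g P) :
    ∫ ω, ((f ω : ℂ) + (g ω : ℂ) * Complex.I) ∂P
      = ((∫ ω, f ω ∂P : ℝ) : ℂ) + ((∫ ω, g ω ∂P : ℝ) : ℂ) * Complex.I := by
  have hF : Integrable (fun ω => (f ω : ℂ) + (g ω : ℂ) * Complex.I) P :=
    hf.ofReal.add (hg.ofReal.mul_const Complex.I)
  rw [← integral_re_add_im hF]
  simp [RCLike.re_to_complex, RCLike.im_to_complex, RCLike.I_to_complex]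

lemma cf_map {Ω : Type*} [MeasurableSpace Ω] (P : Measure Ω)
    {Z : Ω → ℝ} (hZ : Measurable Z) (t : ℝ) :
    cf (Measure.map Z P) t = ∫ ω, Complex.exp (Complex.I * t * Z ω) ∂P := by
  unfold cf
  exact integral_map hZ.aemeasurable
    ((Complex.continuous_exp.comp (continuous_const.mul Complex.continuous_ofReal)).aestronglyMeasurable)

lemma cf_add_indep {Ω : Type*} [MeasurableSpace Ω] (P : Measure Ω) [IsProbabilityMeasure P]
    {X U : Ω → ℝ} (hX : Measurable X) (hU : Measurable U) (hindep : IndepFun X U P) (t : ℝ) :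
    cf (Measure.map (fun ω => X ω + U ω) P) t
      = cf (Measure.map X P) t * cf (Measure.map U P) t := by
  set a : Ω → ℝ := fun ω => Real.cos (t * X ω) with ha
  set b : Ω → ℝ := fun ω => Real.sin (t * X ω) with hb
  set c : Ω → ℝ := fun ω => Real.cos (t * U ω) with hc
  set d : Ω → ℝ := fun ω => Real.sin (t * U ω) with hd
  have ma : Measurable a := Real.measurable_cos.comp (measurable_const.mul hX)
  have mb : Measurable b := Real.measurable_sin.comp (measurable_const.mul hX)
  have mc : Measurable c := Real.measurable_cos.comp (measurable_const.mul hU)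
  have md : Measurable d := Real.measurable_sin.comp (measurable_const.mul hU)
  have ia : Integrable a P := integrable_bd1 P ma fun ω => Real.abs_cos_le_one _
  have ib : Integrable b P := integrable_bd1 P mb fun ω => Real.abs_sin_le_one _
  have ic : Integrable c P := integrable_bd1 P mc fun ω => Real.abs_cos_le_one _
  have id : Integrable d P := integrable_bd1 P md fun ω => Real.abs_sin_le_one _
  -- independence of the trig compositions
  have iac : IndepFun a c P := hindep.comp (Real.measurable_cos.comp (measurable_const_mul t))
    (Real.measurable_cos.comp (measurable_const_mul t))
  have iad : IndepFun a d P := hindep.comp (Real.measurable_cos.comp (measurable_const_mul t))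
    (Real.measurable_sin.comp (measurable_const_mul t))
  have ibc : IndepFun b c P := hindep.comp (Real.measurable_sin.comp (measurable_const_mul t))
    (Real.measurable_cos.comp (measurable_const_mul t))
  have ibd : IndepFun b d P := hindep.comp (Real.measurable_sin.comp (measurable_const_mul t))
    (Real.measurable_sin.comp (measurable_const_mul t))
  have Eac : ∫ ω, a ω * c ω ∂P = (∫ ω, a ω ∂P) * ∫ ω, c ω ∂P :=
    iac.integral_fun_mul_eq_mul_integral ia.aestronglyMeasurable ic.aestronglyMeasurable
  have Ead : ∫ ω, a ω * d ω ∂P = (∫ ω, a ω ∂P) * ∫ ω, d ω ∂P :=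
    iad.integral_fun_mul_eq_mul_integral ia.aestronglyMeasurable id.aestronglyMeasurable
  have Ebc : ∫ ω, b ω * c ω ∂P = (∫ ω, b ω ∂P) * ∫ ω, c ω ∂P :=
    ibc.integral_fun_mul_eq_mul_integral ib.aestronglyMeasurable ic.aestronglyMeasurable
  have Ebd : ∫ ω, b ω * d ω ∂P = (∫ ω, b ω ∂P) * ∫ ω, d ω ∂P :=
    ibd.integral_fun_mul_eq_mul_integral ib.aestronglyMeasurable id.aestronglyMeasurable
  have key : ∀ x y : ℝ, Complex.I * t * (x : ℂ) = Complex.I * ((t * x : ℝ) : ℂ) ∧ True := by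
    intro x y; constructor; · push_cast; ring
    · trivial
  rw [cf_map P (Z := fun ω => X ω + U ω) (hX.add hU), cf_map P hX, cf_map P hU]
  have e1 : ∀ ω, Complex.exp (Complex.I * t * ((X ω + U ω : ℝ) : ℂ))
      = ((a ω * c ω - b ω * d ω : ℝ) : ℂ) + ((a ω * d ω + b ω * c ω : ℝ) : ℂ) * Complex.I := by
    intro ω
    have : Complex.I * t * ((X ω + U ω : ℝ) : ℂ)
        = Complex.I * ((t * X ω : ℝ) : ℂ) + Complex.I * ((t * U ω : ℝ) : ℂ) := by
      push_cast; ring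
    rw [this, Complex.exp_add, cexp_I_mul, cexp_I_mul, ha, hb, hc, hd]
    push_cast
    ring_nf
    simp [Complex.I_sq]
    ring
  have e2 : ∀ ω, Complex.exp (Complex.I * t * ((X ω : ℝ) : ℂ))
      = ((a ω : ℝ) : ℂ) + ((b ω : ℝ) : ℂ) * Complex.I := by
    intro ω
    have : Complex.I * t * ((X ω : ℝ) : ℂ) = Complex.I * ((t * X ω : ℝ) : ℂ) := by push_cast; ring
    rw [this, cexp_I_mul]
  have e3 : ∀ ω, Complex.exp (Complex.I * t * ((U ω : ℝ) : ℂ))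
      = ((c ω : ℝ) : ℂ) + ((d ω : ℝ) : ℂ) * Complex.I := by
    intro ω
    have : Complex.I * t * ((U ω : ℝ) : ℂ) = Complex.I * ((t * U ω : ℝ) : ℂ) := by push_cast; ring
    rw [this, cexp_I_mul]
  have pac : Integrable (fun ω => a ω * c ω) P := integrable_bd1 P (ma.mul mc)
    fun ω => by rw [abs_mul]; exact mul_le_one₀ (Real.abs_cos_le_one _) (abs_nonneg _) (Real.abs_cos_le_one _)
  have pad : Integrable (fun ω => a ω * d ω) P := integrable_bd1 P (ma.mul md)
    fun ω => by rw [abs_mul]; exact mul_le_one₀ (Real.abs_cos_le_one _) (abs_nonneg _) (Real.abs_sin_le_one _)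
  have pbc : Integrable (fun ω => b ω * c ω) P := integrable_bd1 P (mb.mul mc)
    fun ω => by rw [abs_mul]; exact mul_le_one₀ (Real.abs_sin_le_one _) (abs_nonneg _) (Real.abs_cos_le_one _)
  have pbd : Integrable (fun ω => b ω * d ω) P := integrable_bd1 P (mb.mul md)
    fun ω => by rw [abs_mul]; exact mul_le_one₀ (Real.abs_sin_le_one _) (abs_nonneg _) (Real.abs_sin_le_one _)
  simp only [e1, e2, e3]
  rw [integral_ofReal_add_mul_I P (f := fun ω => a ω * c ω - b ω * d ω) (g := fun ω => a ω * d ω + b ω * c ω) (pac.sub pbd) (pad.add pbc),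
    integral_ofReal_add_mul_I P ia ib, integral_ofReal_add_mul_I P ic id,
    integral_sub pac pbd, integral_add pad pbc, Eac, Ead, Ebc, Ebd]
  push_cast
  ring_nf
  simp [Complex.I_sq]
  ring_nf

lemma cf_unif_zero (Δ : ℝ) (hΔ : 0 < Δ) : cf (uniformDitherMeasure Δ) (2 * Real.pi / Δ) = 0 := by
  have ht : (2 * Real.pi / Δ) ≠ 0 := by positivity
  have hc : Complex.I * ((2 * Real.pi / Δ : ℝ) : ℂ) ≠ 0 :=
    mul_ne_zero Complex.I_ne_zero (by exact_mod_cast ht)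
  unfold cf uniformDitherMeasure
  rw [integral_smul_measure]
  suffices h : (∫ x in Set.Icc (-(Δ / 2)) (Δ / 2),
      Complex.exp (Complex.I * (2 * Real.pi / Δ : ℝ) * x)) = 0 by
    rw [h]; simp
  rw [integral_Icc_eq_integral_Ioc,
    ← intervalIntegral.integral_of_le (by linarith : -(Δ / 2) ≤ Δ / 2)]
  rw [integral_exp_mul_complex hc]
  have h1 : Complex.I * ((2 * Real.pi / Δ : ℝ) : ℂ) * ((Δ / 2 : ℝ) : ℂ)
      = (Real.pi : ℂ) * Complex.I := by
    have hΔ' : (Δ : ℂ) ≠ 0 := by exact_mod_cast hΔ.ne'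
    push_cast
    field_simp
  have h2 : Complex.I * ((2 * Real.pi / Δ : ℝ) : ℂ) * ((-(Δ / 2) : ℝ) : ℂ)
      = -((Real.pi : ℂ) * Complex.I) := by
    have hΔ' : (Δ : ℂ) ≠ 0 := by exact_mod_cast hΔ.ne'
    push_cast
    field_simp
  rw [h1, h2, Complex.exp_neg, Complex.exp_pi_mul_I]
  norm_num

lemma cf_gauss_ne (m : ℝ) (v : NNReal) (t : ℝ) : cf (gaussianReal m v) t ≠ 0 := by
  rcases eq_or_ne v 0 with rfl | hv
  · rw [gaussianReal_zero_var]
    unfold cf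
    rw [integral_dirac]
    exact Complex.exp_ne_zero _
  · have hv' : (0 : ℝ) < (v : ℝ) := by positivity
    rw [gaussianReal_of_var_ne_zero _ hv]
    unfold cf
    have hpdf : gaussianPDF m v = fun x => ((gaussianPDFReal m v x).toNNReal : ENNReal) := rfl
    rw [hpdf, integral_withDensity_eq_integral_smul
      ((measurable_gaussianPDFReal m v).real_toNNReal)]
    set b : ℂ := -(1 / (2 * (v : ℝ)) : ℝ) with hb
    have hbre : b.re < 0 := by
      simp [hb]
      positivity
    set c : ℂ := (m / (v : ℝ) : ℝ) + Complex.I * t with hcdef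
    set d : ℂ := -(m ^ 2 / (2 * (v : ℝ)) : ℝ) with hddef
    have key : (fun x : ℝ => (gaussianPDFReal m v x).toNNReal • Complex.exp (Complex.I * t * x))
        = fun x : ℝ => ((Real.sqrt (2 * Real.pi * v))⁻¹ : ℝ) *
            Complex.exp (b * x ^ 2 + c * x + d) := by
      funext x
      rw [NNReal.smul_def, Real.coe_toNNReal _ (gaussianPDFReal_nonneg m v x), gaussianPDFReal,
        Complex.real_smul]
      push_cast
      rw [mul_assoc, ← Complex.exp_add]
      congr 2
      rw [hb, hcdef, hddef]
      have hvC : ((v : ℝ) : ℂ) ≠ 0 := by exact_mod_cast hv'.ne'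
      push_cast
      field_simp
      ring
    rw [key, integral_const_mul, integral_cexp_quadratic hbre c d]
    apply mul_ne_zero
    · simp only [ne_eq, Complex.ofReal_eq_zero, inv_eq_zero]
      positivity
    apply mul_ne_zero
    · have hb0 : b ≠ 0 := fun h0 => by rw [h0] at hbre; simp at hbre
      rw [Ne, Complex.cpow_eq_zero_iff]
      rintro ⟨h, -⟩
      exact absurd h (div_ne_zero (Complex.ofReal_ne_zero.mpr Real.pi_ne_zero)
        (neg_ne_zero.mpr hb0))
    · exact Complex.exp_ne_zero _

end Aux

/-- The sum of an arbitrary real random variable `X` and an independent random variable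
`U` uniformly distributed on `[-Δ/2, Δ/2]` (with `Δ > 0`) is never Gaussian: its law
differs from the Gaussian law of every mean `m` and every variance `v ≥ 0`. -/
theorem stmt_8 {Ω : Type*} [MeasurableSpace Ω] (P : Measure Ω) [IsProbabilityMeasure P]
    (Δ : ℝ) (hΔ : 0 < Δ) (X U : Ω → ℝ) (hX : Measurable X) (hU : Measurable U)
    (hindep : IndepFun X U P)
    (hunif : Measure.map U P = uniformDitherMeasure Δ) :
    ∀ (m : ℝ) (v : NNReal),
      Measure.map (fun ω => X ω + U ω) P ≠ gaussianReal m v := by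
  intro m v h
  have h1 := cf_add_indep P hX hU hindep (2 * Real.pi / Δ)
  rw [h, hunif, cf_unif_zero Δ hΔ, mul_zero] at h1
  exact cf_gauss_ne m v _ h1
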